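/- Let X_1, …, X_n be independent random variables taking values in [0,1] and let μ = E[Σ_{i=1}^n X_i]. Then for every integer k with 0 ≤ k ≤ n: E[S_k(X_1, …, X_n)] ≤ C(n, k) · (μ/n)^k ≤ μ^k / k!. -/

import Mathlib

open MeasureTheory ProbabilityTheory

/-- The elementary symmetric polynomial `S_k(x_1, …, x_n)`. In particular `S_0 = 1`. -/
noncomputable def symS (n k : ℕ) (x : Fin n → ℝ) : ℝ :=
  ∑ T ∈ Finset.univ.powersetCard k, ∏ i ∈ T, x i

section Helpers

variable {α : Type*} [DecidableEq α]

/-- Elementary symmetric sum over a finite index set. -/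
noncomputable def esumAux (x : α → ℝ) (S : Finset α) (r : ℕ) : ℝ :=
  ∑ T ∈ S.powersetCard r, ∏ l ∈ T, x l

lemma esumAux_zero (x : α → ℝ) (S : Finset α) : esumAux x S 0 = 1 := by
  simp [esumAux]

lemma esumAux_nonneg {x : α → ℝ} (hx : ∀ i, 0 ≤ x i) (S : Finset α) (r : ℕ) :
    0 ≤ esumAux x S r :=
  Finset.sum_nonneg fun T _ => Finset.prod_nonneg fun l _ => hx l

lemma esumAux_congr {x y : α → ℝ} {S : Finset α} (h : ∀ i ∈ S, x i = y i) (r : ℕ) :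
    esumAux x S r = esumAux y S r := by
  unfold esumAux
  refine Finset.sum_congr rfl fun T hT => Finset.prod_congr rfl fun l hl => ?_
  exact h l ((Finset.mem_powersetCard.mp hT).1 hl)

lemma esumAux_insert (x : α → ℝ) {i : α} {S : Finset α} (h : i ∉ S) (r : ℕ) :
    esumAux x (insert i S) (r + 1) = esumAux x S (r + 1) + x i * esumAux x S r := by
  unfold esumAux
  rw [Finset.powersetCard_succ_insert h]
  rw [Finset.sum_union, Finset.sum_image, Finset.mul_sum]
  · congr 1
    refine Finset.sum_congr rfl fun T hT => ?_
    have hiT : i ∉ T := fun hiT => h ((Finset.mem_powersetCard.mp hT).1 hiT)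
    rw [Finset.prod_insert hiT]
  · intro T1 h1 T2 h2 heq
    have hi1 : i ∉ T1 := fun hiT => h ((Finset.mem_powersetCard.mp h1).1 hiT)
    have hi2 : i ∉ T2 := fun hiT => h ((Finset.mem_powersetCard.mp h2).1 hiT)
    have := congrArg (fun s => Finset.erase s i) heq
    simpa [Finset.erase_insert hi1, Finset.erase_insert hi2] using this
  · rw [Finset.disjoint_left]
    intro T hT hT'
    have hiT : i ∉ T := fun hiT => h ((Finset.mem_powersetCard.mp hT).1 hiT)
    rcases Finset.mem_image.mp hT' with ⟨U, _, rfl⟩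
    exact hiT (Finset.mem_insert_self _ _)

end Helpers

lemma symS_eq_esumAux (n k : ℕ) (x : Fin n → ℝ) :
    symS n k x = esumAux x Finset.univ k := rfl

/-- Smoothing step: replacing two coordinates keeping the sum and increasing the product
increases `symS`. -/
lemma symS_smooth {n k : ℕ} {i j : Fin n} (hij : i ≠ j) {x y : Fin n → ℝ}
    (hagree : ∀ l, l ≠ i → l ≠ j → x l = y l) (hx : ∀ l, 0 ≤ x l)
    (hsum : x i + x j = y i + y j) (hprod : x i * x j ≤ y i * y j) :
    symS n k x ≤ symS n k y := by
  classical
  set U : Finset (Fin n) := (Finset.univ.erase i).erase j with hU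
  have hjU : j ∉ U := Finset.notMem_erase _ _
  have hjmem : j ∈ Finset.univ.erase i := Finset.mem_erase.mpr ⟨hij.symm, Finset.mem_univ _⟩
  have hins_j : insert j U = Finset.univ.erase i := Finset.insert_erase hjmem
  have hiU' : i ∉ insert j U := by
    rw [hins_j]; exact Finset.notMem_erase _ _
  have hins_i : insert i (insert j U) = Finset.univ := by
    rw [hins_j]; exact Finset.insert_erase (Finset.mem_univ i)
  have hUcong : ∀ r, esumAux x U r = esumAux y U r := by
    intro r
    refine esumAux_congr (fun l hl => ?_) r
    have hl' := Finset.mem_erase.mp hl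
    have hl'' := Finset.mem_erase.mp hl'.2
    exact hagree l hl''.1 hl'.1
  have hUnn : ∀ r, 0 ≤ esumAux x U r := fun r => esumAux_nonneg hx U r
  rw [symS_eq_esumAux, symS_eq_esumAux, ← hins_i]
  have expand : ∀ (z : Fin n → ℝ) (r : ℕ),
      esumAux z (insert i (insert j U)) (r + 2)
        = esumAux z U (r + 2) + (z i + z j) * esumAux z U (r + 1)
          + z i * z j * esumAux z U r := by
    intro z r
    rw [esumAux_insert z hiU', esumAux_insert z hjU, esumAux_insert z hjU]
    ring
  have expand1 : ∀ (z : Fin n → ℝ),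
      esumAux z (insert i (insert j U)) 1 = esumAux z U 1 + (z i + z j) := by
    intro z
    rw [show (1 : ℕ) = 0 + 1 from rfl, esumAux_insert z hiU', esumAux_insert z hjU,
      esumAux_zero, esumAux_zero]
    ring
  match k with
  | 0 => simp [esumAux_zero]
  | 1 =>
    rw [expand1 x, expand1 y, hUcong 1]
    linarith
  | (r + 2) =>
    rw [expand x r, expand y r, hUcong r, hUcong (r + 1), hUcong (r + 2)]
    have h1 := hUnn r
    have h2 := hUnn (r + 1)
    rw [hUcong r] at h1
    rw [hUcong (r + 1)] at h2
    nlinarith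

lemma symS_const (n k : ℕ) (a : ℝ) {x : Fin n → ℝ} (hx : ∀ i, x i = a) :
    symS n k x = (n.choose k : ℝ) * a ^ k := by
  unfold symS
  rw [Finset.sum_congr rfl (fun T hT => ?_), Finset.sum_const, Finset.card_powersetCard,
    Finset.card_univ, Fintype.card_fin, nsmul_eq_mul]
  rw [Finset.prod_congr rfl fun l _ => hx l, Finset.prod_const,
    (Finset.mem_powersetCard.mp hT).2]

/-- Key deterministic inequality (Maclaurin-type): for nonnegative reals summing to `n·a`,
`S_k ≤ C(n,k) a^k`. Proved by a finite smoothing argument. -/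
lemma symS_le_choose (n k : ℕ) (a : ℝ) (ha : 0 ≤ a) :
    ∀ (m : ℕ) (x : Fin n → ℝ), (∀ i, 0 ≤ x i) → (∑ i, x i) = n * a →
      (Finset.univ.filter (fun i => x i ≠ a)).card ≤ m →
      symS n k x ≤ (n.choose k : ℝ) * a ^ k := by
  intro m
  induction m with
  | zero =>
    intro x hx hsum hcard
    have hall : ∀ i, x i = a := by
      intro i
      by_contra hne
      have : i ∈ Finset.univ.filter (fun i => x i ≠ a) := by
        simp [hne]
      have := Finset.card_pos.mpr ⟨i, this⟩
      omega
    exact (symS_const n k a hall).le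
  | succ m ih =>
    intro x hx hsum hcard
    by_cases hall : ∀ i, x i = a
    · exact (symS_const n k a hall).le
    push_neg at hall
    obtain ⟨i, hi⟩ := hall
    have hconst : ∑ _l : Fin n, a = (n : ℝ) * a := by
      rw [Finset.sum_const, Finset.card_univ, Fintype.card_fin, nsmul_eq_mul]
    -- produce p, q with x p < a < x q
    have hpq : ∃ p q, x p < a ∧ a < x q := by
      rcases lt_or_gt_of_ne hi with hlt | hgt
      · have hexq : ∃ q, a < x q := by
          by_contra hq
          push_neg at hq
          have : ∑ l, x l < ∑ _l : Fin n, a :=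
            Finset.sum_lt_sum (fun l _ => hq l) ⟨i, Finset.mem_univ i, hlt⟩
          rw [hconst] at this
          exact absurd hsum (ne_of_lt this)
        obtain ⟨q, hq⟩ := hexq
        exact ⟨i, q, hlt, hq⟩
      · -- x i > a; find p with x p < a
        have : ∃ p, x p < a := by
          by_contra hp
          push_neg at hp
          have : ∑ _l : Fin n, a < ∑ l, x l :=
            Finset.sum_lt_sum (fun l _ => hp l) ⟨i, Finset.mem_univ i, hgt⟩
          rw [hconst] at this
          exact absurd hsum (ne_of_gt this)
        obtain ⟨p, hp⟩ := this
        exact ⟨p, i, hp, hgt⟩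
    obtain ⟨p, q, hp, hq⟩ := hpq
    have hpqne : p ≠ q := fun h => absurd (h ▸ hp) (not_lt.mpr hq.le)
    set y : Fin n → ℝ := Function.update (Function.update x p a) q (x p + x q - a) with hy
    have hyq : y q = x p + x q - a := Function.update_self _ _ _
    have hyp : y p = a := by
      rw [hy]
      rw [Function.update_of_ne hpqne, Function.update_self]
    have hyl : ∀ l, l ≠ p → l ≠ q → y l = x l := by
      intro l hlp hlq
      rw [hy, Function.update_of_ne hlq, Function.update_of_ne hlp]
    have hynn : ∀ l, 0 ≤ y l := by
      intro l
      by_cases hlq : l = q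
      · subst hlq; rw [hyq]; nlinarith [hx p]
      by_cases hlp : l = p
      · subst hlp; rw [hyp]; exact ha
      · rw [hyl l hlp hlq]; exact hx l
    have hysum : ∑ l, y l = (n : ℝ) * a := by
      have h1 : ∑ l, y l = (x p + x q - a) + ∑ l ∈ Finset.univ \ {q}, Function.update x p a l := by
        rw [hy, Finset.sum_update_of_mem (Finset.mem_univ q)]
      have hpmem : p ∈ Finset.univ \ {q} := by
        simp [hpqne]
      have h2 : ∑ l ∈ Finset.univ \ {q}, Function.update x p a l
          = a + ∑ l ∈ (Finset.univ \ {q}) \ {p}, x l := by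
        rw [Finset.sum_update_of_mem hpmem]
      have h3 : ∑ l, x l = x q + ∑ l ∈ Finset.univ \ {q}, x l := by
        rw [← Finset.erase_eq, Finset.add_sum_erase _ _ (Finset.mem_univ q)]
      have h4 : ∑ l ∈ Finset.univ \ {q}, x l = x p + ∑ l ∈ (Finset.univ \ {q}) \ {p}, x l := by
        rw [← Finset.erase_eq ((Finset.univ : Finset (Fin n)) \ {q}),
          Finset.add_sum_erase _ _ hpmem]
      rw [h1, h2, ← hsum, h3, h4]
      ring
    have hstep : symS n k x ≤ symS n k y := by
      refine symS_smooth hpqne (fun l hlp hlq => (hyl l hlp hlq).symm) hx ?_ ?_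
      · rw [hyp, hyq]; ring
      · rw [hyp, hyq]; nlinarith
    have hycard : (Finset.univ.filter (fun l => y l ≠ a)).card ≤ m := by
      have hsub : Finset.univ.filter (fun l => y l ≠ a)
          ⊆ (Finset.univ.filter (fun l => x l ≠ a)).erase p := by
        intro l hl
        have hl' : y l ≠ a := (Finset.mem_filter.mp hl).2
        have hlp : l ≠ p := fun h => hl' (h ▸ hyp)
        refine Finset.mem_erase.mpr ⟨hlp, Finset.mem_filter.mpr ⟨Finset.mem_univ _, ?_⟩⟩
        by_cases hlq : l = q
        · subst hlq; exact ne_of_gt hq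
        · rw [← hyl l hlp hlq]; exact hl'
      have hpmem : p ∈ Finset.univ.filter (fun l => x l ≠ a) := by
        simp [ne_of_lt hp]
      have h5 := Finset.card_le_card hsub
      rw [Finset.card_erase_of_mem hpmem] at h5
      omega
    exact hstep.trans (ih y hynn hysum hycard)

/-- For independent random variables `X_1, …, X_n ∈ [0,1]` with
`μ = E[Σ X_i]`, for every integer `0 ≤ k ≤ n`:
`E[S_k(X_1, …, X_n)] ≤ C(n, k) · (μ/n)^k ≤ μ^k / k!`. -/
theorem esymm_expectation_bound
    {Ω : Type*} [MeasureSpace Ω] [IsProbabilityMeasure (ℙ : Measure Ω)]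
    (n : ℕ) (X : Fin n → Ω → ℝ)
    (hXmeas : ∀ i, Measurable (X i))
    (hXrange : ∀ i ω, X i ω ∈ Set.Icc (0 : ℝ) 1)
    (hindep : iIndepFun X ℙ)
    (μ : ℝ) (hμ : μ = ∫ ω, (∑ i, X i ω) ∂ℙ)
    (k : ℕ) (hk : k ≤ n) :
    (∫ ω, symS n k (fun i => X i ω) ∂ℙ) ≤ (n.choose k : ℝ) * (μ / n) ^ k ∧
      (n.choose k : ℝ) * (μ / n) ^ k ≤ μ ^ k / (Nat.factorial k : ℝ) := by
  classical
  set m : Fin n → ℝ := fun i => ∫ ω, X i ω ∂ℙ with hm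
  have hint : ∀ i, Integrable (X i) ℙ := by
    intro i
    refine Integrable.mono' (integrable_const 1) (hXmeas i).aestronglyMeasurable ?_
    filter_upwards with ω
    rw [Real.norm_eq_abs, abs_of_nonneg (hXrange i ω).1]
    exact (hXrange i ω).2
  have hm0 : ∀ i, 0 ≤ m i := fun i => integral_nonneg fun ω => (hXrange i ω).1
  have hprodint : ∀ T : Finset (Fin n), Integrable (fun ω => ∏ i ∈ T, X i ω) ℙ := by
    intro T
    refine Integrable.mono' (integrable_const 1)
      (Finset.measurable_prod T fun i _ => hXmeas i).aestronglyMeasurable ?_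
    filter_upwards with ω
    rw [Real.norm_eq_abs, abs_of_nonneg (Finset.prod_nonneg fun i _ => (hXrange i ω).1)]
    exact Finset.prod_le_one (fun i _ => (hXrange i ω).1) (fun i _ => (hXrange i ω).2)
  have hprodeq : ∀ T : Finset (Fin n), (∫ ω, ∏ i ∈ T, X i ω ∂ℙ) = ∏ i ∈ T, m i := by
    intro T
    induction T using Finset.induction_on with
    | empty => simp
    | insert _ _ hiT ih =>
      rename_i i T
      have hIndep : IndepFun (X i) (∏ j ∈ T, X j) ℙ :=
        (hindep.indepFun_finsetProd_of_notMem hXmeas hiT).symm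
      have hprodfn : (∏ j ∈ T, X j) = fun ω => ∏ j ∈ T, X j ω := by
        ext ω; simp
      have hYmeas : AEStronglyMeasurable (∏ j ∈ T, X j) ℙ := by
        rw [hprodfn]
        exact (Finset.measurable_prod T fun j _ => hXmeas j).aestronglyMeasurable
      have := hIndep.integral_mul_eq_mul_integral (hXmeas i).aestronglyMeasurable hYmeas
      have heq : (∫ ω, ∏ j ∈ insert i T, X j ω ∂ℙ)
          = ∫ ω, (X i * ∏ j ∈ T, X j) ω ∂ℙ := by
        refine integral_congr_ae (Filter.Eventually.of_forall fun ω => ?_)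
        simp [Finset.prod_insert hiT]
      rw [heq, this, Finset.prod_insert hiT, ← ih]
      congr 1
      refine integral_congr_ae (Filter.Eventually.of_forall fun ω => ?_)
      simp
  have hμ' : μ = ∑ i, m i := by
    rw [hμ, integral_finset_sum _ fun i _ => hint i]
  have hμnn : 0 ≤ μ := hμ' ▸ Finset.sum_nonneg fun i _ => hm0 i
  have hEsym : (∫ ω, symS n k (fun i => X i ω) ∂ℙ) = symS n k m := by
    unfold symS
    rw [integral_finset_sum _ fun T _ => hprodint T]
    exact Finset.sum_congr rfl fun T _ => hprodeq T
  have ha : 0 ≤ μ / n := div_nonneg hμnn (Nat.cast_nonneg n)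
  have hsum' : ∑ i, m i = (n : ℝ) * (μ / n) := by
    rcases Nat.eq_zero_or_pos n with hn | hn
    · subst hn
      simp
    · have hn' : (n : ℝ) ≠ 0 := Nat.cast_ne_zero.mpr hn.ne'
      rw [← hμ']
      field_simp
  constructor
  · rw [hEsym]
    exact symS_le_choose n k (μ / n) ha _ m hm0 hsum' le_rfl
  · rcases Nat.eq_zero_or_pos n with hn | hn
    · subst hn
      interval_cases k
      norm_num
    · have hn' : (0 : ℝ) < (n : ℝ) ^ k := pow_pos (by exact_mod_cast hn) k
      have hkf : (0 : ℝ) < (Nat.factorial k : ℝ) := by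
        exact_mod_cast Nat.factorial_pos k
      have hdesc : ((n.choose k : ℝ)) * (Nat.factorial k : ℝ) ≤ (n : ℝ) ^ k := by
        have h1 : Nat.factorial k * n.choose k ≤ n ^ k := by
          rw [← Nat.descFactorial_eq_factorial_mul_choose]
          exact Nat.descFactorial_le_pow n k
        calc ((n.choose k : ℝ)) * (Nat.factorial k : ℝ)
            = ((Nat.factorial k * n.choose k : ℕ) : ℝ) := by push_cast; ring
          _ ≤ ((n ^ k : ℕ) : ℝ) := by exact_mod_cast h1
          _ = (n : ℝ) ^ k := by push_cast; ring
      have hμk : 0 ≤ μ ^ k := pow_nonneg hμnn k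
      rw [div_pow, ← mul_div_assoc, div_le_div_iff₀ hn' hkf]
      nlinarith
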